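/- Let ℓ(t) = 2·log₂(2t + 1). Let n ≥ 1 be an integer and c > 1, λ > 1 be reals. Then n · Σ_{x=0}^∞ min(c·n·x^(−λ), 1) · ( ℓ((x+1)/n) − ℓ(x/n) ) ≤ 26·c·n^(1/λ)/min(λ − 1, 1), where the x = 0 term of the sum is interpreted with min(c·n·0^(−λ), 1) = 1. -/

import Mathlib

open Real

/-- Bernoulli-type inequality: `(a+lam)·(a+1)^(-lam) ≤ a^(1-lam)` for `a ≥ 1`, `lam ≥ 1`. -/
lemma bern_aux {a lam : ℝ} (ha : 1 ≤ a) (hlam : 1 ≤ lam) :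
    (a + lam) * (a + 1) ^ (-lam) ≤ a ^ (1 - lam) := by
  have ha0 : (0:ℝ) < a := lt_of_lt_of_le one_pos ha
  have hb0 : (0:ℝ) < a + 1 := by linarith
  have hia : (0:ℝ) ≤ 1/a := by positivity
  have hbern : 1 + lam * (1/a) ≤ (1 + 1/a) ^ lam :=
    one_add_mul_self_le_rpow_one_add (by linarith) hlam
  have hal : (0:ℝ) < a ^ (lam - 1) := rpow_pos_of_pos ha0 _
  have halam : (0:ℝ) < a ^ lam := rpow_pos_of_pos ha0 _
  have h1 : a ^ (lam - 1) * (a + lam) ≤ (a + 1) ^ lam := by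
    have e1 : a ^ lam = a ^ (lam - 1) * a := by
      rw [← rpow_add_one ha0.ne' (lam - 1)]; ring_nf
    have e2 : (1 + 1/a) ^ lam * a ^ lam = (a + 1) ^ lam := by
      rw [← mul_rpow (by positivity) ha0.le]
      congr 1; field_simp
    calc a ^ (lam - 1) * (a + lam) = a ^ lam * (1 + lam * (1/a)) := by
          rw [e1]; field_simp
      _ ≤ a ^ lam * ((1 + 1/a) ^ lam) :=
          mul_le_mul_of_nonneg_left hbern halam.le
      _ = (a + 1) ^ lam := by rw [mul_comm]; exact e2
  have hbl : (0:ℝ) < (a + 1) ^ lam := rpow_pos_of_pos hb0 _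
  rw [rpow_neg hb0.le, show (1:ℝ) - lam = -(lam - 1) by ring, rpow_neg ha0.le,
    ← div_eq_mul_inv, ← one_div, div_le_div_iff₀ hbl hal]
  nlinarith [h1]

/-- telescoping step: `(a+1)^(-lam) ≤ (a^(1-lam) - (a+1)^(1-lam))/(lam-1)`. -/
lemma step_aux {a lam : ℝ} (ha : 1 ≤ a) (hlam : 1 < lam) :
    (a + 1) ^ (-lam) ≤ (a ^ (1 - lam) - (a + 1) ^ (1 - lam)) / (lam - 1) := by
  have hb0 : (0:ℝ) < a + 1 := by linarith
  have h := bern_aux ha hlam.le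
  have e : (a + 1) ^ (1 - lam) = (a + 1) * (a + 1) ^ (-lam) := by
    rw [show (1:ℝ) - lam = 1 + (-lam) by ring, rpow_one_add' hb0.le (by intro h'; nlinarith)]
  rw [le_div_iff₀ (by linarith)]
  nlinarith [rpow_nonneg hb0.le (-lam)]

/-- tail sum bound: `∑'_k (k+T)^(-lam) ≤ T^(-lam) + T^(1-lam)/(lam-1)` for `T ≥ 1`. -/
lemma tail_sum {lam : ℝ} (hlam : 1 < lam) {T : ℕ} (hT : 1 ≤ T) :
    ∑' k : ℕ, ((k + T : ℕ) : ℝ) ^ (-lam) ≤ (T:ℝ) ^ (-lam) + (T:ℝ) ^ (1 - lam) / (lam - 1) := by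
  have hsum : Summable (fun k : ℕ => ((k + T : ℕ) : ℝ) ^ (-lam)) :=
    ((summable_nat_add_iff T).mpr (Real.summable_nat_rpow.mpr (by linarith)))
  rw [Summable.tsum_eq_zero_add hsum]
  have h0 : ((0 + T : ℕ) : ℝ) ^ (-lam) = (T:ℝ) ^ (-lam) := by norm_num
  rw [h0]
  gcongr
  set F : ℕ → ℝ := fun k => ((k + T : ℕ) : ℝ) ^ (1 - lam) with hF
  have hT1 : (1:ℝ) ≤ (T:ℝ) := by exact_mod_cast hT
  apply Real.tsum_le_of_sum_range_le (fun k => rpow_nonneg (by positivity) _)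
  intro m
  have hstep : ∀ i : ℕ, ((i + 1 + T : ℕ) : ℝ) ^ (-lam) ≤ (F i - F (i + 1)) / (lam - 1) := by
    intro i
    have ha : (1:ℝ) ≤ ((i + T : ℕ) : ℝ) := by
      have : (T:ℝ) ≤ ((i + T : ℕ):ℝ) := by exact_mod_cast Nat.le_add_left T i
      linarith
    have := step_aux ha hlam
    have e1 : ((i + T : ℕ) : ℝ) + 1 = ((i + 1 + T : ℕ) : ℝ) := by push_cast; ring
    rw [e1] at this
    simpa [hF, e1] using this
  calc ∑ i ∈ Finset.range m, ((i + 1 + T : ℕ) : ℝ) ^ (-lam)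
      ≤ ∑ i ∈ Finset.range m, (F i - F (i + 1)) / (lam - 1) :=
        Finset.sum_le_sum (fun i _ => hstep i)
    _ = (F 0 - F m) / (lam - 1) := by
        rw [← Finset.sum_div, Finset.sum_range_sub' F m]
    _ ≤ (T:ℝ) ^ (1 - lam) / (lam - 1) := by
        have hF0 : F 0 = (T:ℝ) ^ (1 - lam) := by simp [hF]
        have hFm : 0 ≤ F m := rpow_nonneg (by positivity) _
        rw [hF0.symm]
        gcongr
        · linarith

/-- The concave increasing function `ℓ(t) = 2·log₂(2t + 1)` (with `ℓ(0) = 0`)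
which upper-bounds the Elias gamma codeword length. -/
noncomputable def ell (t : ℝ) : ℝ := 2 * Real.logb 2 (2 * t + 1)

lemma ell_diff_bound {n : ℕ} (hn : 1 ≤ n) (x : ℕ) :
    0 ≤ ell (((x:ℝ) + 1) / n) - ell ((x:ℝ) / n) ∧
    (n:ℝ) * (ell (((x:ℝ) + 1) / n) - ell ((x:ℝ) / n)) ≤ 4 / Real.log 2 := by
  have hn0 : (0:ℝ) < n := by exact_mod_cast hn
  have hx0 : (0:ℝ) ≤ x := Nat.cast_nonneg x
  set B : ℝ := 2 * ((x:ℝ)/n) + 1 with hBdef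
  set A : ℝ := 2 * (((x:ℝ)+1)/n) + 1 with hAdef
  have hB1 : 1 ≤ B := by
    have : (0:ℝ) ≤ 2 * ((x:ℝ)/n) := by positivity
    rw [hBdef]; linarith
  have hB0 : (0:ℝ) < B := by linarith
  have hAB : A = B + 2/n := by rw [hAdef, hBdef]; field_simp; ring
  have h2n : (0:ℝ) < 2/n := by positivity
  have hA0 : (0:ℝ) < A := by rw [hAB]; exact add_pos hB0 h2n
  have hlog2 : (0:ℝ) < Real.log 2 := Real.log_pos (by norm_num)
  have hellA : ell (((x:ℝ)+1)/n) = 2 * (Real.log A / Real.log 2) := by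
    rw [ell, Real.logb, hAdef]
  have hellB : ell ((x:ℝ)/n) = 2 * (Real.log B / Real.log 2) := by
    rw [ell, Real.logb, hBdef]
  have hlogAB : Real.log B ≤ Real.log A := by
    apply Real.log_le_log hB0; rw [hAB]; linarith
  constructor
  · rw [hellA, hellB]
    have : Real.log B / Real.log 2 ≤ Real.log A / Real.log 2 := by gcongr
    linarith
  · have key : Real.log A - Real.log B ≤ 2/(n*B) := by
      rw [← Real.log_div hA0.ne' hB0.ne']
      calc Real.log (A/B) ≤ A/B - 1 := Real.log_le_sub_one_of_pos (by positivity)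
        _ = 2/(n*B) := by rw [hAB]; field_simp; ring
    have h1 : 2*(n:ℝ)*(Real.log A - Real.log B) ≤ 4/B := by
      have := mul_le_mul_of_nonneg_left key (by positivity : (0:ℝ) ≤ 2*(n:ℝ))
      calc 2*(n:ℝ)*(Real.log A - Real.log B) ≤ 2*(n:ℝ)*(2/(n*B)) := this
        _ = 4/B := by field_simp; ring
    have h2 : 4/B ≤ 4 := by rw [div_le_iff₀ hB0]; linarith
    rw [hellA, hellB]
    have expand : (n:ℝ) * (2 * (Real.log A / Real.log 2) - 2 * (Real.log B / Real.log 2))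
        = 2*(n:ℝ)*(Real.log A - Real.log B) / Real.log 2 := by ring
    rw [expand]
    gcongr
    linarith

set_option maxHeartbeats 1600000 in
/-- The key series estimate for the gap-encoding part of the
difference run-length scheme under a power-law tail:
`n · ∑_{x=0}^∞ min(c·n·x^{-λ}, 1)·(ℓ((x+1)/n) − ℓ(x/n)) ≤ 26·c·n^{1/λ}/min(λ−1,1)`,
where the `x = 0` term is interpreted with `min(c·n·0^{-λ}, 1) = 1`. -/
theorem gap_series_power_law
    (n : ℕ) (hn : 1 ≤ n) (c lam : ℝ) (hc : 1 < c) (hlam : 1 < lam) :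
    (n : ℝ) * ∑' x : ℕ,
        (if x = 0 then 1 else min (c * n * (x : ℝ) ^ (-lam)) 1)
          * (ell ((x + 1) / n) - ell (x / n))
      ≤ 26 * c * (n : ℝ) ^ (1 / lam) / min (lam - 1) 1 := by
  have hn0 : (0:ℝ) < n := by exact_mod_cast hn
  have hn1 : (1:ℝ) ≤ n := by exact_mod_cast hn
  have hlog2 : (0:ℝ) < Real.log 2 := Real.log_pos (by norm_num)
  have hlam0 : (0:ℝ) < lam := by linarith
  have hcn1 : (1:ℝ) ≤ c * n := by nlinarith
  have hcn0 : (0:ℝ) < c * n := by linarith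
  set y : ℝ := (c * n) ^ (1/lam) with hydef
  have hy1 : (1:ℝ) ≤ y := Real.one_le_rpow hcn1 (by positivity)
  have hy0 : (0:ℝ) < y := by linarith
  set T : ℕ := ⌈y⌉₊ with hTdef
  have hT1 : 1 ≤ T := Nat.ceil_pos.mpr hy0
  have hTy : y ≤ (T:ℝ) := Nat.le_ceil y
  have hTy2 : (T:ℝ) ≤ y + 1 := (Nat.ceil_lt_add_one hy0.le).le
  have hT0 : (0:ℝ) < (T:ℝ) := lt_of_lt_of_le hy0 hTy
  have hyneg : y ^ (-lam) = (c*n)⁻¹ := by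
    rw [hydef, ← Real.rpow_mul hcn0.le,
      show 1/lam * (-lam) = (-1 : ℝ) by field_simp, Real.rpow_neg_one]
  set w : ℕ → ℝ := fun x => if x = 0 then 1 else min (c * n * (x:ℝ) ^ (-lam)) 1 with hwdef
  set f : ℕ → ℝ := fun x => ell (((x:ℝ) + 1)/n) - ell ((x:ℝ)/n) with hfdef
  set b : ℕ → ℝ := fun x =>
    if x < T then 4 / Real.log 2 else (4 / Real.log 2) * (c * n * (x:ℝ) ^ (-lam)) with hbdef
  have hw0 : ∀ x, 0 ≤ w x := by
    intro x
    by_cases h : x = 0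
    · simp [hwdef, h]
    · simp only [hwdef, if_neg h]
      exact le_min (by positivity) zero_le_one
  have hw1 : ∀ x, w x ≤ 1 := by
    intro x
    by_cases h : x = 0
    · simp [hwdef, h]
    · simp only [hwdef, if_neg h]
      exact min_le_right _ _
  have hwle : ∀ x, x ≠ 0 → w x ≤ c * n * (x:ℝ) ^ (-lam) := by
    intro x h
    simp only [hwdef, if_neg h]
    exact min_le_left _ _
  -- per-term bound
  have hgb : ∀ x, (n:ℝ) * (w x * f x) ≤ b x := by
    intro x
    obtain ⟨hf0, hfn⟩ := ell_diff_bound hn x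
    by_cases hx : x < T
    · simp only [hbdef, if_pos hx]
      calc (n:ℝ) * (w x * f x) = w x * ((n:ℝ) * f x) := by ring
        _ ≤ 1 * ((n:ℝ) * f x) :=
            mul_le_mul_of_nonneg_right (hw1 x) (mul_nonneg hn0.le hf0)
        _ = (n:ℝ) * f x := one_mul _
        _ ≤ 4 / Real.log 2 := hfn
    · simp only [hbdef, if_neg hx]
      push_neg at hx
      have hxne : x ≠ 0 := by omega
      calc (n:ℝ) * (w x * f x) = w x * ((n:ℝ) * f x) := by ring
        _ ≤ (c * n * (x:ℝ) ^ (-lam)) * (4 / Real.log 2) :=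
            mul_le_mul (hwle x hxne) hfn (mul_nonneg hn0.le hf0) (by positivity)
        _ = (4 / Real.log 2) * (c * n * (x:ℝ) ^ (-lam)) := by ring
  have hg0 : ∀ x, 0 ≤ (n:ℝ) * (w x * f x) := fun x =>
    mul_nonneg hn0.le (mul_nonneg (hw0 x) (ell_diff_bound hn x).1)
  -- summability
  have hu_sum : Summable (fun k : ℕ => ((k + T : ℕ):ℝ) ^ (-lam)) :=
    (summable_nat_add_iff T).mpr (Real.summable_nat_rpow.mpr (by linarith))
  have hb_shift : (fun k : ℕ => b (k + T))
      = fun k => (4 / Real.log 2) * (c * n * ((k + T : ℕ):ℝ) ^ (-lam)) := by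
    funext k
    simp only [hbdef, if_neg (by omega : ¬ (k + T < T))]
  have hb_sum : Summable b := by
    rw [← summable_nat_add_iff T, hb_shift]
    exact ((hu_sum.mul_left (c * n)).mul_left (4 / Real.log 2))
  have hg_sum : Summable (fun x => (n:ℝ) * (w x * f x)) :=
    Summable.of_nonneg_of_le hg0 hgb hb_sum
  -- tail sum estimate
  have hQ : ∑' k : ℕ, ((k + T : ℕ):ℝ) ^ (-lam)
      ≤ (T:ℝ) ^ (-lam) + (T:ℝ) ^ (1 - lam) / (lam - 1) := tail_sum hlam hT1
  have hTneg : (T:ℝ) ^ (-lam) ≤ (c*n)⁻¹ := by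
    rw [← hyneg]
    exact Real.rpow_le_rpow_of_nonpos hy0 hTy (by linarith)
  have h1 : c * n * (T:ℝ) ^ (-lam) ≤ 1 := by
    calc c * n * (T:ℝ) ^ (-lam) ≤ c * n * (c*n)⁻¹ :=
        mul_le_mul_of_nonneg_left hTneg hcn0.le
      _ = 1 := mul_inv_cancel₀ hcn0.ne'
  have h2 : c * n * (T:ℝ) ^ (1 - lam) ≤ y := by
    have ht : (T:ℝ) ^ (1 - lam) ≤ y ^ (1 - lam) :=
      Real.rpow_le_rpow_of_nonpos hy0 hTy (by linarith)
    have hy2 : y ^ (1 - lam) = y * (c*n)⁻¹ := by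
      rw [show (1:ℝ) - lam = 1 + (-lam) by ring, Real.rpow_add hy0, Real.rpow_one, hyneg]
    calc c * n * (T:ℝ) ^ (1 - lam) ≤ c * n * (y * (c*n)⁻¹) := by
          rw [← hy2]; exact mul_le_mul_of_nonneg_left ht hcn0.le
      _ = y := by field_simp
  -- assemble
  have hhead : ∑ i ∈ Finset.range T, b i = (T:ℝ) * (4 / Real.log 2) := by
    rw [Finset.sum_congr rfl
      (fun i hi => by simp only [hbdef, if_pos (Finset.mem_range.mp hi)] :
        ∀ i ∈ Finset.range T, b i = 4 / Real.log 2),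
      Finset.sum_const, Finset.card_range, nsmul_eq_mul]
  have htail : ∑' k : ℕ, b (k + T)
      = (4 / Real.log 2) * (c * n * ∑' k : ℕ, ((k + T : ℕ):ℝ) ^ (-lam)) := by
    rw [hb_shift, tsum_mul_left, tsum_mul_left]
  -- final numeric comparison data
  set m : ℝ := min (lam - 1) 1 with hmdef
  have hm0 : (0:ℝ) < m := lt_min (by linarith) one_pos
  have hm1 : m ≤ 1 := min_le_right _ _
  have hml : m ≤ lam - 1 := min_le_left _ _
  have hnr1 : (1:ℝ) ≤ (n:ℝ) ^ (1/lam) := Real.one_le_rpow hn1 (by positivity)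
  have hz1 : (1:ℝ) ≤ c * (n:ℝ) ^ (1/lam) :=
    le_trans hnr1 (le_mul_of_one_le_left (by positivity) hc.le)
  have hz0 : (0:ℝ) < c * (n:ℝ) ^ (1/lam) := by linarith
  have hyz : y ≤ c * (n:ℝ) ^ (1/lam) := by
    rw [hydef, Real.mul_rpow (by linarith : (0:ℝ) ≤ c) hn0.le]
    have hcle : c ^ (1/lam) ≤ c := by
      calc c ^ (1/lam) ≤ c ^ (1:ℝ) :=
          Real.rpow_le_rpow_of_exponent_le hc.le ((div_le_one hlam0).mpr hlam.le)
        _ = c := Real.rpow_one c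
    exact mul_le_mul_of_nonneg_right hcle (Real.rpow_nonneg hn0.le _)
  calc (n : ℝ) * ∑' x : ℕ,
        (if x = 0 then 1 else min (c * n * (x : ℝ) ^ (-lam)) 1)
          * (ell ((x + 1) / n) - ell (x / n))
      = ∑' x : ℕ, (n:ℝ) * (w x * f x) := by
        rw [← tsum_mul_left]
    _ ≤ ∑' x : ℕ, b x := Summable.tsum_le_tsum hgb hg_sum hb_sum
    _ = (∑ i ∈ Finset.range T, b i) + ∑' k : ℕ, b (k + T) :=
        (Summable.sum_add_tsum_nat_add T hb_sum).symm
    _ ≤ (T:ℝ) * (4 / Real.log 2)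
        + (4 / Real.log 2) * (c * n * ((T:ℝ) ^ (-lam) + (T:ℝ) ^ (1 - lam) / (lam - 1))) := by
        rw [hhead, htail]
        have : c * n * ∑' k : ℕ, ((k + T : ℕ):ℝ) ^ (-lam)
            ≤ c * n * ((T:ℝ) ^ (-lam) + (T:ℝ) ^ (1 - lam) / (lam - 1)) :=
          mul_le_mul_of_nonneg_left hQ hcn0.le
        exact add_le_add_right (mul_le_mul_of_nonneg_left this (by positivity)) _
    _ ≤ (4 / Real.log 2) * ((T:ℝ) + 1 + y / (lam - 1)) := by
        have e2 : c * n * (T:ℝ) ^ (1 - lam) / (lam - 1) ≤ y / (lam - 1) :=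
          (div_le_div_iff_of_pos_right (by linarith)).mpr h2
        have expand : (T:ℝ) * (4 / Real.log 2)
            + (4 / Real.log 2) * (c * n * ((T:ℝ) ^ (-lam) + (T:ℝ) ^ (1 - lam) / (lam - 1)))
            = (4 / Real.log 2)
              * ((T:ℝ) + (c * n * (T:ℝ) ^ (-lam) + c * n * (T:ℝ) ^ (1 - lam) / (lam - 1))) := by
          ring
        rw [expand]
        apply mul_le_mul_of_nonneg_left ?_ (by positivity)
        linarith [h1, e2]
    _ ≤ 26 * c * (n:ℝ) ^ (1/lam) / m := by
        have ha : (0:ℝ) < c * (n:ℝ) ^ (1/lam) / m := by positivity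
        have e2 : y / (lam - 1) ≤ c * (n:ℝ) ^ (1/lam) / m :=
          div_le_div₀ (by linarith) hyz hm0 hml
        have e3 : (T:ℝ) + 1 ≤ 3 * (c * (n:ℝ) ^ (1/lam) / m) := by
          rw [mul_div_assoc', le_div_iff₀ hm0]
          have hstep : ((T:ℝ) + 1) * m ≤ ((T:ℝ) + 1) * 1 :=
            mul_le_mul_of_nonneg_left hm1 (by positivity)
          linarith [hstep, hTy2, hyz, hz1]
        have hchain : (T:ℝ) + 1 + y / (lam - 1)
            ≤ 4 * (c * (n:ℝ) ^ (1/lam) / m) := by linarith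
        calc (4 / Real.log 2) * ((T:ℝ) + 1 + y / (lam - 1))
            ≤ (4 / Real.log 2) * (4 * (c * (n:ℝ) ^ (1/lam) / m)) :=
              mul_le_mul_of_nonneg_left hchain (by positivity)
          _ ≤ 26 * (c * (n:ℝ) ^ (1/lam) / m) := by
              rw [show (4/Real.log 2) * (4 * (c * (n:ℝ) ^ (1/lam) / m))
                  = 16 * (c * (n:ℝ) ^ (1/lam) / m) / Real.log 2 by ring,
                div_le_iff₀ hlog2]
              have hl : 26 * (c * (n:ℝ) ^ (1/lam) / m) * 0.6931471803
                  ≤ 26 * (c * (n:ℝ) ^ (1/lam) / m) * Real.log 2 :=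
                mul_le_mul_of_nonneg_left Real.log_two_gt_d9.le (by positivity)
              linarith [hl, ha]
          _ = 26 * c * (n:ℝ) ^ (1/lam) / m := by ring
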